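/- For n ≥ 4, the affine Eulerian polynomial of type D satisfies D̃ₙ(x) = Σ_{i=0}^{n−2} ((n−i−1)x + i+1)·(x·T_{n−1,i}(x) + T_{n−1,n+i−1}(x)). -/

import Mathlib

open Polynomial

/-- `f` has only real zeros (every complex zero is real). -/
def RealRooted (f : Polynomial ℝ) : Prop :=
  ∀ z : ℂ, z ∈ (f.map (algebraMap ℝ ℂ)).roots → z.im = 0

/-- all zeros of `f` are real (counted with multiplicity). -/
def AllRealRoots (f : Polynomial ℝ) : Prop :=
  f.roots.card = f.natDegree

/-- two polynomials are compatible if every nonnegative linear combination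
has only real zeros. -/
def Compatible (f g : Polynomial ℝ) : Prop :=
  ∀ c d : ℝ, 0 ≤ c → 0 ≤ d → RealRooted (C c * f + C d * g)

/-- `Interlaces g f` means `g ⪯ f`: both are real-rooted with positive leading
coefficients, and listing the zeros in decreasing order `u` (of `f`) and `v`
(of `g`), either `deg f = deg g` and `vₙ ≤ uₙ ≤ ⋯ ≤ v₁ ≤ u₁`, or
`deg f = deg g + 1` and `uₙ ≤ vₙ₋₁ ≤ ⋯ ≤ v₁ ≤ u₁`. -/
def Interlaces (g f : Polynomial ℝ) : Prop :=
  0 < f.leadingCoeff ∧ 0 < g.leadingCoeff ∧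
  ∃ u v : List ℝ,
    u.Pairwise (· ≥ ·) ∧ v.Pairwise (· ≥ ·) ∧
    f.roots = (u : Multiset ℝ) ∧ g.roots = (v : Multiset ℝ) ∧
    u.length = f.natDegree ∧ v.length = g.natDegree ∧
    (u.length = v.length ∨ u.length = v.length + 1) ∧
    (∀ (i : ℕ) (hv : i < v.length) (hu : i < u.length),
      v.get ⟨i, hv⟩ ≤ u.get ⟨i, hu⟩) ∧
    (∀ (i : ℕ) (hu : i + 1 < u.length) (hv : i < v.length),
      u.get ⟨i + 1, hu⟩ ≤ v.get ⟨i, hv⟩)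

/-- the finite set of type `D` inversion sequences: `e : Fin n → ℕ` with
`e i < 2(i+1)`. -/
def invSeqs (n : ℕ) : Finset (Fin n → ℕ) :=
  ((Finset.univ : Finset (Fin n → Fin (2 * n + 1))).image
      (fun e => fun i => (e i : ℕ))).filter
    (fun e => ∀ i : Fin n, e i < 2 * ((i : ℕ) + 1))

/-- value of an inversion sequence at (0-indexed) position `i`. -/
def ev {n : ℕ} (e : Fin n → ℕ) (i : ℕ) : ℕ :=
  if h : i < n then e ⟨i, h⟩ else 0

/-- the type `D` ascent statistic:
`asc_D e = χ(e₁ + e₂/2 ≥ 3/2) + #{i ∈ [n-1] : eᵢ/i < eᵢ₊₁/(i+1)}`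
(1-indexed). -/
noncomputable def ascD {n : ℕ} (e : Fin n → ℕ) : ℕ :=
  (if 3 ≤ 2 * ev e 0 + ev e 1 then 1 else 0) +
    ((Finset.Ico 1 n).filter
      (fun i => (i + 1) * ev e (i - 1) < i * ev e i)).card

/-- `exc e = #{i : eᵢ ≥ i}` (1-indexed). -/
noncomputable def excD {n : ℕ} (e : Fin n → ℕ) : ℕ :=
  ((Finset.range n).filter (fun j => j + 1 ≤ ev e j)).card

/-- the affine type `D` ascent statistic:
`ãsc_D e = asc_D e + χ(e_{n-1}/(n-1) + e_n/n < (2n-1)/n)`. -/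
noncomputable def affAscD {n : ℕ} (e : Fin n → ℕ) : ℕ :=
  ascD e +
    (if n * ev e (n - 2) + (n - 1) * ev e (n - 1) < (n - 1) * (2 * n - 1)
      then 1 else 0)

/-- the refined Eulerian polynomial `T_{n,i}(x)` of type `D`. -/
noncomputable def TD (n i : ℕ) : Polynomial ℝ :=
  ∑ e ∈ (invSeqs n).filter (fun e => ev e (n - 1) = i), X ^ ascD e

/-- the refined `q`-Eulerian polynomial `T_{n,i}(x;q)` of type `D`. -/
noncomputable def TqD (n i : ℕ) (q : ℝ) : Polynomial ℝ :=
  ∑ e ∈ (invSeqs n).filter (fun e => ev e (n - 1) = i),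
    C q ^ excD e * X ^ ascD e

/-- the refined affine Eulerian polynomial `T̃_{n,i}(x)` of type `D`. -/
noncomputable def TtD (n i : ℕ) : Polynomial ℝ :=
  ∑ e ∈ (invSeqs n).filter (fun e => ev e (n - 1) = i), X ^ affAscD e

/-- the affine Eulerian polynomial `D̃ₙ(x)` of type `D`, defined via
`2·D̃ₙ(x) = Σ_{e} x^{ãsc_D e}`. -/
noncomputable def DtPoly (n : ℕ) : Polynomial ℝ :=
  C (1 / 2 : ℝ) * ∑ e ∈ invSeqs n, X ^ affAscD e

-- auxiliary
lemma mem_invSeqs {n : ℕ} (e : Fin n → ℕ) :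
    e ∈ invSeqs n ↔ ∀ i : Fin n, e i < 2 * ((i : ℕ) + 1) := by
  unfold invSeqs
  simp only [Finset.mem_filter, Finset.mem_image, Finset.mem_univ, true_and]
  constructor
  · rintro ⟨_, h⟩; exact h
  · intro h
    refine ⟨⟨fun i => ⟨e i, ?_⟩, ?_⟩, h⟩
    · have h1 := h i; have h2 : (i : ℕ) + 1 ≤ n := i.2; omega
    · funext i; rfl

def esnoc (n : ℕ) (e : Fin (n - 1) → ℕ) (k : ℕ) : Fin n → ℕ :=
  fun i => if h : (i : ℕ) < n - 1 then e ⟨i, h⟩ else k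

lemma ev_esnoc_lt {n : ℕ} (e : Fin (n - 1) → ℕ) (k : ℕ) {i : ℕ} (h : i < n - 1) :
    ev (esnoc n e k) i = ev e i := by
  unfold ev esnoc
  rw [dif_pos (by omega : i < n), dif_pos h, dif_pos h]

lemma ev_esnoc_last {n : ℕ} (e : Fin (n - 1) → ℕ) (k : ℕ) (hn : 1 ≤ n) :
    ev (esnoc n e k) (n - 1) = k := by
  unfold ev esnoc
  rw [dif_pos (by omega : n - 1 < n)]
  exact dif_neg (by simp)

def etrunc (n : ℕ) (e : Fin n → ℕ) : Fin (n - 1) → ℕ :=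
  fun i => e ⟨i, by omega⟩

lemma esnoc_etrunc {n : ℕ} (hn : 1 ≤ n) (e : Fin n → ℕ) :
    esnoc n (etrunc n e) (e ⟨n - 1, by omega⟩) = e := by
  funext i
  unfold esnoc etrunc
  dsimp only
  by_cases h : (i : ℕ) < n - 1
  · rw [dif_pos h]
  · rw [dif_neg h]
    congr 1
    have := i.2
    exact Fin.ext (by simp; omega)

lemma sum_invSeqs_snoc (n : ℕ) (hn : 1 ≤ n) (f : (Fin n → ℕ) → Polynomial ℝ) :
    ∑ e ∈ invSeqs n, f e =
      ∑ p ∈ (invSeqs (n - 1)) ×ˢ Finset.range (2 * n), f (esnoc n p.1 p.2) := by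
  refine Finset.sum_nbij' (fun e => (etrunc n e, e ⟨n - 1, by omega⟩))
    (fun p => esnoc n p.1 p.2) ?_ ?_ ?_ ?_ ?_
  · intro e he
    rw [mem_invSeqs] at he
    rw [Finset.mem_product, Finset.mem_range, mem_invSeqs]
    refine ⟨fun i => he ⟨i, by omega⟩, ?_⟩
    have := he ⟨n - 1, by omega⟩
    simp only at this ⊢
    omega
  · intro p hp
    rw [Finset.mem_product, Finset.mem_range, mem_invSeqs] at hp
    rw [mem_invSeqs]
    intro i
    unfold esnoc
    by_cases h : (i : ℕ) < n - 1
    · rw [dif_pos h]; exact hp.1 ⟨i, h⟩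
    · rw [dif_neg h]
      have h2 : (i : ℕ) = n - 1 := by have := i.2; omega
      rw [h2]
      have := hp.2; omega
  · intro e _
    exact esnoc_etrunc hn e
  · intro p _
    ext
    · unfold etrunc esnoc
      dsimp only
      rw [dif_pos]
    · unfold esnoc
      dsimp only
      rw [dif_neg (by simp)]
  · intro e _
    exact congrArg f (esnoc_etrunc hn e).symm

lemma affAscD_esnoc {n : ℕ} (hn : 4 ≤ n) (e : Fin (n - 1) → ℕ) (k : ℕ) :
    affAscD (esnoc n e k) = ascD e +
      ((if n * ev e (n - 2) < (n - 1) * k then 1 else 0) +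
       (if n * ev e (n - 2) + (n - 1) * k < (n - 1) * (2 * n - 1) then 1 else 0)) := by
  have h0 : ev (esnoc n e k) 0 = ev e 0 := ev_esnoc_lt e k (by omega)
  have h1 : ev (esnoc n e k) 1 = ev e 1 := ev_esnoc_lt e k (by omega)
  have h2 : ev (esnoc n e k) (n - 2) = ev e (n - 2) := ev_esnoc_lt e k (by omega)
  have h3 : ev (esnoc n e k) (n - 1) = k := ev_esnoc_last e k (by omega)
  have hasc : ascD (esnoc n e k) = ascD e +
      (if n * ev e (n - 2) < (n - 1) * k then 1 else 0) := by
    unfold ascD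
    rw [h0, h1]
    have hsplit : Finset.Ico 1 n = Finset.Ico 1 (n - 1) ∪ Finset.Ico (n - 1) n :=
      (Finset.Ico_union_Ico_eq_Ico (by omega) (by omega)).symm
    rw [hsplit, Finset.filter_union,
      Finset.card_union_of_disjoint (Finset.disjoint_filter_filter
        (Finset.Ico_disjoint_Ico_consecutive 1 (n - 1) n))]
    have hA : (Finset.Ico 1 (n - 1)).filter
        (fun i => (i + 1) * ev (esnoc n e k) (i - 1) < i * ev (esnoc n e k) i) =
        (Finset.Ico 1 (n - 1)).filter
        (fun i => (i + 1) * ev e (i - 1) < i * ev e i) := by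
      apply Finset.filter_congr
      intro i hi
      rw [Finset.mem_Ico] at hi
      rw [ev_esnoc_lt e k (by omega), ev_esnoc_lt e k (by omega)]
    have hB : Finset.Ico (n - 1) n = {n - 1} := by
      rw [show n = (n - 1) + 1 by omega]
      simp [Nat.Ico_succ_singleton]
    rw [hA, hB]
    have hlast : ((n - 1) + 1) * ev (esnoc n e k) ((n - 1) - 1) <
        (n - 1) * ev (esnoc n e k) (n - 1) ↔ n * ev e (n - 2) < (n - 1) * k := by
      rw [show (n - 1) - 1 = n - 2 by omega, h2, h3, show (n - 1) + 1 = n by omega]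
    rw [Finset.filter_singleton]
    by_cases hc : n * ev e (n - 2) < (n - 1) * k
    · rw [if_pos (hlast.mpr hc), if_pos hc]
      simp; omega
    · rw [if_neg (fun h => hc (hlast.mp h)), if_neg hc]
      simp
  unfold affAscD
  rw [hasc, h2, h3]
  omega

noncomputable def Pj (n j : ℕ) : Polynomial ℝ :=
  ∑ k ∈ Finset.range (2 * n),
    (X : Polynomial ℝ) ^ ((if n * j < (n - 1) * k then 1 else 0) +
      (if n * j + (n - 1) * k < (n - 1) * (2 * n - 1) then 1 else 0))

lemma C_nsmul (m : ℕ) (p : Polynomial ℝ) : m • p = C (m : ℝ) * p := by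
  rw [nsmul_eq_mul, ← map_natCast (C : ℝ →+* Polynomial ℝ)]

lemma Pj_lo {n j : ℕ} (hn : 4 ≤ n) (hj : j ≤ n - 2) :
    Pj n j = C (2 : ℝ) * ((C ((n : ℝ) - j - 1) * X + C ((j : ℝ) + 1)) * X) := by
  obtain ⟨m, rfl⟩ : ∃ m, n = m + 1 := ⟨n - 1, by omega⟩
  have hm : 3 ≤ m := by omega
  have hj' : j + 1 ≤ m := by omega
  unfold Pj
  simp only [Nat.add_sub_cancel]
  rw [show 2 * (m + 1) - 1 = 2 * m + 1 from by omega]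
  have hsplit : Finset.range (2 * (m + 1)) =
      (Finset.Ico 0 (j + 1) ∪ Finset.Ico (j + 1) (2 * m + 1 - j)) ∪
        Finset.Ico (2 * m + 1 - j) (2 * (m + 1)) := by
    rw [Finset.Ico_union_Ico_eq_Ico (by omega) (by omega),
      Finset.Ico_union_Ico_eq_Ico (by omega) (by omega), Finset.range_eq_Ico]
  have hd1 : Disjoint (Finset.Ico 0 (j + 1) ∪ Finset.Ico (j + 1) (2 * m + 1 - j))
      (Finset.Ico (2 * m + 1 - j) (2 * (m + 1))) := by
    rw [Finset.disjoint_left]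
    intro a ha hb
    simp only [Finset.mem_union, Finset.mem_Ico] at ha hb
    omega
  rw [hsplit, Finset.sum_union hd1,
    Finset.sum_union (Finset.Ico_disjoint_Ico_consecutive _ _ _)]
  have e1 : ∀ k ∈ Finset.Ico 0 (j + 1),
      (X : Polynomial ℝ) ^ ((if (m + 1) * j < m * k then 1 else 0) +
        (if (m + 1) * j + m * k < m * (2 * m + 1) then 1 else 0)) = X := by
    intro k hk
    rw [Finset.mem_Ico] at hk
    have hk' : k ≤ j := by omega
    have h1 : m * k ≤ m * j := Nat.mul_le_mul_left m hk'
    rw [if_neg (by nlinarith), if_pos (by nlinarith), zero_add, pow_one]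
  have e2 : ∀ k ∈ Finset.Ico (j + 1) (2 * m + 1 - j),
      (X : Polynomial ℝ) ^ ((if (m + 1) * j < m * k then 1 else 0) +
        (if (m + 1) * j + m * k < m * (2 * m + 1) then 1 else 0)) = X ^ 2 := by
    intro k hk
    rw [Finset.mem_Ico] at hk
    obtain ⟨hk1, hk2⟩ := hk
    have hk2' : k + j ≤ 2 * m := by omega
    have h1 : m * (j + 1) ≤ m * k := Nat.mul_le_mul_left m hk1
    have h2 : m * (k + j) ≤ m * (2 * m) := Nat.mul_le_mul_left m hk2'
    rw [if_pos (by nlinarith), if_pos (by nlinarith)]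
  have e3 : ∀ k ∈ Finset.Ico (2 * m + 1 - j) (2 * (m + 1)),
      (X : Polynomial ℝ) ^ ((if (m + 1) * j < m * k then 1 else 0) +
        (if (m + 1) * j + m * k < m * (2 * m + 1) then 1 else 0)) = X := by
    intro k hk
    rw [Finset.mem_Ico] at hk
    have hk1 : 2 * m + 1 ≤ k + j := by omega
    have h1 : m * (2 * m + 1) ≤ m * (k + j) := Nat.mul_le_mul_left m hk1
    have h2 : 2 * m * (j + 1) ≤ 2 * m * m := Nat.mul_le_mul_left (2 * m) hj'
    rw [if_pos (by nlinarith), if_neg (by nlinarith), pow_one]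
  rw [Finset.sum_congr rfl e1, Finset.sum_congr rfl e2, Finset.sum_congr rfl e3,
    Finset.sum_const, Finset.sum_const, Finset.sum_const,
    Nat.card_Ico, Nat.card_Ico, Nat.card_Ico, C_nsmul, C_nsmul, C_nsmul]
  have c1 : ((j + 1 - 0 : ℕ) : ℝ) = (j : ℝ) + 1 := by push_cast; ring
  have c2 : ((2 * m + 1 - j - (j + 1) : ℕ) : ℝ) = 2 * ((m : ℝ) + 1 - j - 1) := by
    rw [show 2 * m + 1 - j - (j + 1) = 2 * m - 2 * j from by omega,
      Nat.cast_sub (by omega)]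
    push_cast; ring
  have c3 : ((2 * (m + 1) - (2 * m + 1 - j) : ℕ) : ℝ) = (j : ℝ) + 1 := by
    rw [show 2 * (m + 1) - (2 * m + 1 - j) = j + 1 from by omega]
    push_cast; ring
  rw [c1, c2, c3]
  simp only [map_mul, map_add, map_sub, map_one, map_ofNat, map_natCast]
  push_cast
  ring

lemma Pj_hi {n i : ℕ} (hn : 4 ≤ n) (hi : i ≤ n - 2) :
    Pj n (n - 1 + i) = C (2 : ℝ) * (C ((n : ℝ) - i - 1) * X + C ((i : ℝ) + 1)) := by
  obtain ⟨m, rfl⟩ : ∃ m, n = m + 1 := ⟨n - 1, by omega⟩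
  have hm : 3 ≤ m := by omega
  have hi' : i + 1 ≤ m := by omega
  unfold Pj
  simp only [Nat.add_sub_cancel]
  rw [show 2 * (m + 1) - 1 = 2 * m + 1 from by omega]
  have hsplit : Finset.range (2 * (m + 1)) =
      (Finset.Ico 0 (m - i) ∪ Finset.Ico (m - i) (m + i + 2)) ∪
        Finset.Ico (m + i + 2) (2 * (m + 1)) := by
    rw [Finset.Ico_union_Ico_eq_Ico (by omega) (by omega),
      Finset.Ico_union_Ico_eq_Ico (by omega) (by omega), Finset.range_eq_Ico]
  have hd1 : Disjoint (Finset.Ico 0 (m - i) ∪ Finset.Ico (m - i) (m + i + 2))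
      (Finset.Ico (m + i + 2) (2 * (m + 1))) := by
    rw [Finset.disjoint_left]
    intro a ha hb
    simp only [Finset.mem_union, Finset.mem_Ico] at ha hb
    omega
  rw [hsplit, Finset.sum_union hd1,
    Finset.sum_union (Finset.Ico_disjoint_Ico_consecutive _ _ _)]
  have e1 : ∀ k ∈ Finset.Ico 0 (m - i),
      (X : Polynomial ℝ) ^ ((if (m + 1) * (m + i) < m * k then 1 else 0) +
        (if (m + 1) * (m + i) + m * k < m * (2 * m + 1) then 1 else 0)) = X := by
    intro k hk
    rw [Finset.mem_Ico] at hk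
    have hk' : k + i + 1 ≤ m := by omega
    have h1 : m * (k + i + 1) ≤ m * m := Nat.mul_le_mul_left m hk'
    rw [if_neg (by nlinarith), if_pos (by nlinarith), zero_add, pow_one]
  have e2 : ∀ k ∈ Finset.Ico (m - i) (m + i + 2),
      (X : Polynomial ℝ) ^ ((if (m + 1) * (m + i) < m * k then 1 else 0) +
        (if (m + 1) * (m + i) + m * k < m * (2 * m + 1) then 1 else 0)) = 1 := by
    intro k hk
    rw [Finset.mem_Ico] at hk
    obtain ⟨hk1, hk2⟩ := hk
    have hk1' : m ≤ k + i := by omega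
    have hk2' : k ≤ m + i + 1 := by omega
    have h1 : m * m ≤ m * (k + i) := Nat.mul_le_mul_left m hk1'
    have h2 : m * k ≤ m * (m + i + 1) := Nat.mul_le_mul_left m hk2'
    rw [if_neg (by nlinarith), if_neg (by nlinarith)]
    norm_num
  have e3 : ∀ k ∈ Finset.Ico (m + i + 2) (2 * (m + 1)),
      (X : Polynomial ℝ) ^ ((if (m + 1) * (m + i) < m * k then 1 else 0) +
        (if (m + 1) * (m + i) + m * k < m * (2 * m + 1) then 1 else 0)) = X := by
    intro k hk
    rw [Finset.mem_Ico] at hk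
    have h1 : m * (m + i + 2) ≤ m * k := Nat.mul_le_mul_left m hk.1
    rw [if_pos (by nlinarith), if_neg (by nlinarith), pow_one]
  rw [Finset.sum_congr rfl e1, Finset.sum_congr rfl e2, Finset.sum_congr rfl e3,
    Finset.sum_const, Finset.sum_const, Finset.sum_const,
    Nat.card_Ico, Nat.card_Ico, Nat.card_Ico, C_nsmul, C_nsmul, C_nsmul]
  have c1 : ((m - i - 0 : ℕ) : ℝ) = (m : ℝ) + 1 - i - 1 := by
    rw [Nat.sub_zero, Nat.cast_sub (by omega)]; ring
  have c2 : ((m + i + 2 - (m - i) : ℕ) : ℝ) = 2 * ((i : ℝ) + 1) := by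
    rw [show m + i + 2 - (m - i) = 2 * i + 2 from by omega]; push_cast; ring
  have c3 : ((2 * (m + 1) - (m + i + 2) : ℕ) : ℝ) = (m : ℝ) + 1 - i - 1 := by
    rw [show 2 * (m + 1) - (m + i + 2) = m - i from by omega, Nat.cast_sub (by omega)]
    ring
  rw [c1, c2, c3]
  simp only [map_mul, map_add, map_sub, map_one, map_ofNat, map_natCast]
  push_cast
  ring


/-- Decomposition of the affine Eulerian polynomial of type `D`:
`D̃ₙ(x) = Σ_{i=0}^{n-2} ((n-i-1)x + i+1)(x·T_{n-1,i}(x) + T_{n-1,n+i-1}(x))`. -/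
theorem Dtilde_decomposition (n : ℕ) (hn : 4 ≤ n) :
    DtPoly n = ∑ i ∈ Finset.range (n - 1),
      (C ((n : ℝ) - i - 1) * X + C ((i : ℝ) + 1)) *
        (X * TD (n - 1) i + TD (n - 1) (n + i - 1)) := by
  have h1 : ∑ e ∈ invSeqs n, (X : Polynomial ℝ) ^ affAscD e =
      ∑ e' ∈ invSeqs (n - 1), (X : Polynomial ℝ) ^ ascD e' * Pj n (ev e' (n - 2)) := by
    rw [sum_invSeqs_snoc n (by omega), Finset.sum_product]
    refine Finset.sum_congr rfl (fun e' _ => ?_)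
    rw [Finset.sum_congr rfl (fun k _ => ?_), ← Finset.mul_sum]
    · rfl
    · rw [affAscD_esnoc hn, pow_add]
  have h2 : ∑ e' ∈ invSeqs (n - 1), (X : Polynomial ℝ) ^ ascD e' * Pj n (ev e' (n - 2)) =
      ∑ j ∈ Finset.range (2 * (n - 1)), TD (n - 1) j * Pj n j := by
    have hmap : ∀ e' ∈ invSeqs (n - 1), ev e' (n - 2) ∈ Finset.range (2 * (n - 1)) := by
      intro e' he'
      rw [mem_invSeqs] at he'
      rw [Finset.mem_range]
      have hb := he' ⟨n - 2, by omega⟩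
      simp only at hb
      unfold ev
      rw [dif_pos (by omega : n - 2 < n - 1)]
      omega
    rw [← Finset.sum_fiberwise_of_maps_to hmap
      (fun e' => (X : Polynomial ℝ) ^ ascD e' * Pj n (ev e' (n - 2)))]
    refine Finset.sum_congr rfl (fun j _ => ?_)
    rw [Finset.sum_congr rfl (fun e' he' => ?_)]
    · unfold TD
      rw [Finset.sum_mul, show n - 1 - 1 = n - 2 from by omega]
    · rw [Finset.mem_filter] at he'
      rw [he'.2]
  have h3 : ∑ j ∈ Finset.range (2 * (n - 1)), TD (n - 1) j * Pj n j =
      ∑ j ∈ Finset.range (n - 1), TD (n - 1) j * Pj n j +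
      ∑ i ∈ Finset.range (n - 1), TD (n - 1) ((n - 1) + i) * Pj n ((n - 1) + i) := by
    rw [Finset.range_eq_Ico, ← Finset.sum_Ico_consecutive (fun j => TD (n - 1) j * Pj n j)
      (Nat.zero_le (n - 1)) (by omega : n - 1 ≤ 2 * (n - 1))]
    congr 1
    · rw [Finset.range_eq_Ico]
    rw [Finset.sum_Ico_eq_sum_range]
    rw [show 2 * (n - 1) - (n - 1) = n - 1 from by omega, Finset.range_eq_Ico]
  have h4 : ∑ j ∈ Finset.range (n - 1), TD (n - 1) j * Pj n j =
      ∑ j ∈ Finset.range (n - 1), TD (n - 1) j *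
        (C (2 : ℝ) * ((C ((n : ℝ) - j - 1) * X + C ((j : ℝ) + 1)) * X)) :=
    Finset.sum_congr rfl (fun j hj => by
      rw [Pj_lo hn (by rw [Finset.mem_range] at hj; omega)])
  have h5 : ∑ i ∈ Finset.range (n - 1), TD (n - 1) ((n - 1) + i) * Pj n ((n - 1) + i) =
      ∑ i ∈ Finset.range (n - 1), TD (n - 1) ((n - 1) + i) *
        (C (2 : ℝ) * (C ((n : ℝ) - i - 1) * X + C ((i : ℝ) + 1))) :=
    Finset.sum_congr rfl (fun i hi => by
      rw [Pj_hi hn (by rw [Finset.mem_range] at hi; omega)])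
  unfold DtPoly
  rw [h1, h2, h3, h4, h5]
  have hhalf : (C (1 / 2 : ℝ)) * C (2 : ℝ) = 1 := by
    rw [← C_mul]; norm_num
  rw [← Finset.sum_add_distrib, Finset.mul_sum]
  refine Finset.sum_congr rfl (fun i hi => ?_)
  rw [show n + i - 1 = (n - 1) + i from by omega]
  linear_combination (TD (n - 1) i * ((C ((n : ℝ) - i - 1) * X + C ((i : ℝ) + 1)) * X) +
    TD (n - 1) ((n - 1) + i) * (C ((n : ℝ) - i - 1) * X + C ((i : ℝ) + 1))) * hhalf
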